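/- The function f(x) = ∑_{n≥0} S_n x^{2n+3}/(2n+3) satisfies f(1/(6√3)) = 1/6144, where S_0 = 1/2 and S_n = C(6n,3n)·C(3n,n)/(2(2n+1)·C(2n,n)) for n ≥ 1. -/

import Mathlib

open Real Set intervalIntegral MeasureTheory
set_option maxHeartbeats 1000000

noncomputable def S (n : ℕ) : ℝ :=
  if n = 0 then 1 / 2 else
    (Nat.choose (6 * n) (3 * n) * Nat.choose (3 * n) n : ℝ)
      / (2 * (2 * n + 1) * Nat.choose (2 * n) n)


noncomputable def b (n : ℕ) : ℝ :=
  (Nat.choose (6 * n) (3 * n) * Nat.choose (3 * n) n : ℝ)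
    / (Nat.choose (2 * n) n * 108 ^ n)

lemma b_fact (n : ℕ) : b n =
    (Nat.factorial (6*n) * Nat.factorial n : ℝ)
      / (Nat.factorial (3*n) * (Nat.factorial (2*n))^2 * 108 ^ n) := by
  have h1 : ((6*n).choose (3*n) : ℝ) = (Nat.factorial (6*n)) / (Nat.factorial (3*n) * Nat.factorial (3*n)) := by
    rw [Nat.cast_choose ℝ (by omega : 3*n ≤ 6*n), show 6*n - 3*n = 3*n by omega]
  have h2 : ((3*n).choose n : ℝ) = (Nat.factorial (3*n)) / (Nat.factorial n * Nat.factorial (2*n)) := by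
    rw [Nat.cast_choose ℝ (by omega : n ≤ 3*n), show 3*n - n = 2*n by omega]
  have h3 : ((2*n).choose n : ℝ) = (Nat.factorial (2*n)) / (Nat.factorial n * Nat.factorial n) := by
    rw [Nat.cast_choose ℝ (by omega : n ≤ 2*n), show 2*n - n = n by omega]
  have f1 : (Nat.factorial (6*n) : ℝ) ≠ 0 := by positivity
  have f2 : (Nat.factorial (3*n) : ℝ) ≠ 0 := by positivity
  have f3 : (Nat.factorial (2*n) : ℝ) ≠ 0 := by positivity
  have f4 : (Nat.factorial n : ℝ) ≠ 0 := by positivity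
  have f5 : ((108:ℝ)) ^ n ≠ 0 := by positivity
  rw [b, h1, h2, h3]
  field_simp

lemma b_rec (n : ℕ) :
    (6 * n + 1) * (6 * n + 5) * b n = 9 * (2 * n + 1) * (2 * n + 2) * b (n + 1) := by
  have e6 : Nat.factorial (6*(n+1)) =
      (6*n+6)*((6*n+5)*((6*n+4)*((6*n+3)*((6*n+2)*((6*n+1)*Nat.factorial (6*n)))))) := by
    rw [show 6*(n+1) = (6*n+5)+1 by ring, Nat.factorial_succ,
        show 6*n+5 = (6*n+4)+1 by ring, Nat.factorial_succ,
        show 6*n+4 = (6*n+3)+1 by ring, Nat.factorial_succ,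
        show 6*n+3 = (6*n+2)+1 by ring, Nat.factorial_succ,
        show 6*n+2 = (6*n+1)+1 by ring, Nat.factorial_succ,
        show 6*n+1 = (6*n)+1 by ring, Nat.factorial_succ]
  have e3 : Nat.factorial (3*(n+1)) = (3*n+3)*((3*n+2)*((3*n+1)*Nat.factorial (3*n))) := by
    rw [show 3*(n+1) = (3*n+2)+1 by ring, Nat.factorial_succ,
        show 3*n+2 = (3*n+1)+1 by ring, Nat.factorial_succ,
        show 3*n+1 = (3*n)+1 by ring, Nat.factorial_succ]
  have e2 : Nat.factorial (2*(n+1)) = (2*n+2)*((2*n+1)*Nat.factorial (2*n)) := by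
    rw [show 2*(n+1) = (2*n+1)+1 by ring, Nat.factorial_succ,
        show 2*n+1 = (2*n)+1 by ring, Nat.factorial_succ]
  have e1 : Nat.factorial (n+1) = (n+1)*Nat.factorial n := Nat.factorial_succ n
  have f1 : (Nat.factorial (6*n) : ℝ) ≠ 0 := by positivity
  have f2 : (Nat.factorial (3*n) : ℝ) ≠ 0 := by positivity
  have f3 : (Nat.factorial (2*n) : ℝ) ≠ 0 := by positivity
  have f4 : (Nat.factorial n : ℝ) ≠ 0 := by positivity
  have f5 : ((108:ℝ)) ^ n ≠ 0 := by positivity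
  rw [b_fact, b_fact, e6, e3, e2, e1]
  push_cast
  field_simp
  ring

lemma b_le_one (n : ℕ) : b n ≤ 1 := by
  have bp : ∀ m, 0 < b m := by
    intro m
    have h1 : 0 < (Nat.choose (6 * m) (3 * m) : ℝ) := by
      exact_mod_cast Nat.choose_pos (by omega)
    have h2 : 0 < (Nat.choose (3 * m) m : ℝ) := by
      exact_mod_cast Nat.choose_pos (by omega)
    have h3 : 0 < (Nat.choose (2 * m) m : ℝ) := by
      exact_mod_cast Nat.choose_pos (by omega)
    have h4 : (0:ℝ) < 108 ^ m := by positivity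
    exact div_pos (by positivity) (by positivity)
  induction n with
  | zero => norm_num [b]
  | succ k ih =>
    have hr := b_rec k
    have hk := bp k
    have hpos : (0:ℝ) < 9*(2*(k:ℝ)+1)*(2*(k:ℝ)+2) := by positivity
    have h2 : 9*(2*(k:ℝ)+1)*(2*(k:ℝ)+2) * b (k+1) ≤ 9*(2*(k:ℝ)+1)*(2*(k:ℝ)+2) * 1 := by
      rw [show 9*(2*(k:ℝ)+1)*(2*(k:ℝ)+2) * b (k+1) = (6 * (k:ℝ) + 1) * (6 * (k:ℝ) + 5) * b k by
        rw [hr]]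
      nlinarith [ih, hk, sq_nonneg (k:ℝ)]
    exact le_of_mul_le_mul_left h2 hpos

lemma b_pos (n : ℕ) : 0 < b n := by
  have h1 : 0 < (Nat.choose (6 * n) (3 * n) : ℝ) := by
    exact_mod_cast Nat.choose_pos (by omega)
  have h2 : 0 < (Nat.choose (3 * n) n : ℝ) := by
    exact_mod_cast Nat.choose_pos (by omega)
  have h3 : 0 < (Nat.choose (2 * n) n : ℝ) := by
    exact_mod_cast Nat.choose_pos (by omega)
  have h4 : (0:ℝ) < 108 ^ n := by positivity
  exact div_pos (by positivity) (by positivity)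

lemma b_zero : b 0 = 1 := by norm_num [b]

lemma S_eq (n : ℕ) : S n = b n * 108 ^ n / (2 * (2 * n + 1)) := by
  rcases Nat.eq_zero_or_pos n with h | h
  · subst h; norm_num [S, b]
  · have h3 : 0 < (Nat.choose (2 * n) n : ℝ) := by
      exact_mod_cast Nat.choose_pos (by omega)
    have h4 : (0:ℝ) < 108 ^ n := by positivity
    rw [S, if_neg (by omega), b]
    field_simp


noncomputable def gg (u : ℝ) : ℝ := ∑' n, b n * u ^ (2*n)
noncomputable def D1 (u : ℝ) : ℝ := ∑' n : ℕ, b n * ((2*n : ℕ) * u ^ (2*n-1))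
noncomputable def D2 (u : ℝ) : ℝ :=
  ∑' n : ℕ, b n * ((2*n : ℕ) * ((2*n-1 : ℕ) * u ^ (2*n-1-1)))

/-- master summability lemma -/
lemma summable_master {u r C : ℝ} (hr0 : 0 < r) (hr1 : r < 1) (hu : |u| ≤ r)
    (k m : ℕ) (c : ℕ → ℝ) (e : ℕ → ℕ)
    (hc : ∀ n, |c n| ≤ C * ((n:ℝ)^k + 1)) (he : ∀ n, n ≤ e n + m) :
    Summable (fun n => c n * u ^ e n) := by
  have S1 : Summable (fun n : ℕ => ((n:ℝ)^k + 1) * r^n) := by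
    have h1 := summable_pow_mul_geometric_of_norm_lt_one (R := ℝ) k
      (r := r) (by rw [Real.norm_eq_abs, abs_of_pos hr0]; exact hr1)
    have h2 : Summable (fun n : ℕ => r ^ n) := summable_geometric_of_lt_one hr0.le hr1
    have := h1.add h2
    apply this.congr
    intro n
    ring
  apply Summable.of_norm_bounded (S1.mul_left (C * (1/r^m)))
  intro n
  have h1 : |u ^ e n| ≤ r ^ e n := by
    rw [abs_pow]
    exact pow_le_pow_left₀ (abs_nonneg u) hu _
  have h2 : r ^ e n ≤ r ^ n / r ^ m := by
    rw [le_div_iff₀ (by positivity), ← pow_add]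
    exact pow_le_pow_of_le_one hr0.le hr1.le (he n)
  have h3 : (0:ℝ) ≤ (n:ℝ)^k + 1 := by positivity
  have h4 : |c n| ≤ C * ((n:ℝ)^k + 1) := hc n
  have h5 : (0:ℝ) ≤ C := by
    have h6 := hc 0
    have h7 := abs_nonneg (c 0)
    have h8 : (0:ℝ) ≤ ((0:ℕ):ℝ)^k := by positivity
    nlinarith
  calc ‖c n * u ^ e n‖ = |c n| * |u ^ e n| := abs_mul _ _
    _ ≤ (C * ((n:ℝ)^k + 1)) * (r ^ n / r ^ m) := by
        apply mul_le_mul h4 (h1.trans h2) (abs_nonneg _) (by positivity)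
    _ = C * (1/r^m) * (((n:ℝ)^k + 1) * r^n) := by ring

lemma sum_g {u : ℝ} (h : |u| < 1) : Summable (fun n => b n * u ^ (2*n)) := by
  apply summable_master (r := (|u|+1)/2) (C := 2) (by positivity) (by linarith)
    (by linarith [abs_nonneg u]) 0 0
  · intro n
    rw [abs_of_pos (b_pos n)]
    have := b_le_one n
    norm_num
    linarith
  · intro n; omega

lemma sum_D1 {u : ℝ} (h : |u| < 1) :
    Summable (fun n : ℕ => b n * ((2*n : ℕ) * u ^ (2*n-1))) := by
  have := (summable_master (u := u) (r := (|u|+1)/2) (C := 2) (by positivity) (by linarith)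
    (by linarith [abs_nonneg u]) 1 0 (fun n => b n * (2*n : ℕ)) (fun n => 2*n-1)
    (fun n => by
      rw [abs_mul, abs_of_pos (b_pos n)]
      push_cast
      have h1 := b_le_one n
      have h2 := (b_pos n).le
      have h3 : |(2:ℝ) * n| = 2*n := abs_of_nonneg (by positivity)
      rw [h3]
      nlinarith [Nat.cast_nonneg (α := ℝ) n])
    (fun n => by show n ≤ 2*n-1+0; omega))
  apply this.congr
  intro n
  push_cast
  ring

lemma sum_D2 {u : ℝ} (h : |u| < 1) :
    Summable (fun n : ℕ => b n * ((2*n : ℕ) * ((2*n-1 : ℕ) * u ^ (2*n-1-1)))) := by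
  have := (summable_master (u := u) (r := (|u|+1)/2) (C := 4) (by positivity) (by linarith)
    (by linarith [abs_nonneg u]) 2 2 (fun n => b n * ((2*n : ℕ) * (2*n-1 : ℕ))) (fun n => 2*n-1-1)
    (fun n => by
      rw [abs_mul, abs_of_pos (b_pos n), abs_mul]
      have h1 := b_le_one n
      have h2 := (b_pos n).le
      have c1 : |((2*n : ℕ) : ℝ)| = (2*n : ℕ) := abs_of_nonneg (Nat.cast_nonneg _)
      have c2 : |((2*n-1 : ℕ) : ℝ)| = (2*n-1 : ℕ) := abs_of_nonneg (Nat.cast_nonneg _)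
      rw [c1, c2]
      have d1 : ((2*n : ℕ) : ℝ) ≤ 2 * n := le_of_eq (by push_cast; ring)
      have d2 : ((2*n-1 : ℕ) : ℝ) ≤ 2 * n := by
        have : (2*n-1 : ℕ) ≤ 2*n := by omega
        calc ((2*n-1 : ℕ) : ℝ) ≤ ((2*n : ℕ) : ℝ) := by exact_mod_cast this
          _ = 2*n := by push_cast; ring
      have hn : (0:ℝ) ≤ (n:ℝ) := Nat.cast_nonneg n
      have e1 : ((2*n : ℕ) : ℝ) * ((2*n-1 : ℕ) : ℝ) ≤ (2*n)*(2*n) :=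
        mul_le_mul d1 d2 (Nat.cast_nonneg _) (by positivity)
      nlinarith [Nat.cast_nonneg (α := ℝ) (2*n-1 : ℕ), Nat.cast_nonneg (α := ℝ) (2*n : ℕ),
        mul_nonneg (Nat.cast_nonneg (α := ℝ) (2*n : ℕ)) (Nat.cast_nonneg (α := ℝ) (2*n-1 : ℕ))])
    (fun n => by show n ≤ 2*n-1-1+2; omega))
  apply this.congr
  intro n
  ring

lemma gg_zero : gg 0 = 1 := by
  rw [gg, tsum_eq_single 0 (fun n hn => by
    rw [zero_pow (by omega : 2*n ≠ 0), mul_zero])]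
  norm_num [b_zero]

lemma D1_zero : D1 0 = 0 := by
  rw [D1]
  convert tsum_zero with n
  rcases Nat.eq_zero_or_pos n with h | h
  · subst h; norm_num
  · rw [zero_pow (by omega : 2*n-1 ≠ 0)]; ring

lemma hasDerivAt_gg {u : ℝ} (h : |u| < 1) : HasDerivAt gg (D1 u) u := by
  set r : ℝ := (|u|+1)/2 with hr
  have hr0 : 0 < r := by positivity
  have hr1 : r < 1 := by rw [hr]; linarith
  have hur : |u| < r := by rw [hr]; linarith
  have key : ∀ y ∈ Ioo (-r) r, HasDerivAt (fun z => ∑' n, b n * z ^ (2*n))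
      (∑' n : ℕ, b n * ((2*n : ℕ) * y ^ (2*n-1))) y := by
    intro y hy
    have hyr : |y| < r := abs_lt.mpr ⟨hy.1, hy.2⟩
    apply hasDerivAt_tsum_of_isPreconnected
      (u := fun n : ℕ => 2 * (1/r^0) * (((n:ℝ)^1 + 1) * r^n))
      ?_ isOpen_Ioo (convex_Ioo _ _).isPreconnected
      (fun n z _ => (hasDerivAt_pow (2*n) z).const_mul (b n))
      ?_ (mem_Ioo.mpr ⟨by linarith, hr0⟩ : (0:ℝ) ∈ Ioo (-r) r)
      (sum_g (by rw [abs_zero]; linarith : |(0:ℝ)| < 1)) (mem_Ioo.mpr ⟨hy.1, hy.2⟩)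
    · have h1 := summable_pow_mul_geometric_of_norm_lt_one (R := ℝ) 1
        (r := r) (by rw [Real.norm_eq_abs, abs_of_pos hr0]; exact hr1)
      have h2 : Summable (fun n : ℕ => r ^ n) := summable_geometric_of_lt_one hr0.le hr1
      apply ((h1.add h2).mul_left (2 * (1/r^0))).congr
      intro n; ring
    · intro n z hz
      have hzr : |z| ≤ r := (abs_lt.mpr ⟨hz.1, hz.2⟩).le
      have h1 : |z ^ (2*n-1)| ≤ r ^ (2*n-1) := by
        rw [abs_pow]; exact pow_le_pow_left₀ (abs_nonneg z) hzr _
      have h2 : r ^ (2*n-1) ≤ r ^ n / r ^ 0 := by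
        rw [le_div_iff₀ (by positivity), ← pow_add]
        exact pow_le_pow_of_le_one hr0.le hr1.le (by omega)
      have hb1 := b_le_one n
      have hb0 := (b_pos n).le
      have hc : |b n * ((2*n : ℕ):ℝ)| ≤ 2 * ((n:ℝ)^1 + 1) := by
        rw [abs_mul, abs_of_nonneg hb0, abs_of_nonneg (Nat.cast_nonneg _)]
        push_cast
        nlinarith [Nat.cast_nonneg (α := ℝ) n]
      calc ‖b n * (((2*n : ℕ):ℝ) * z ^ (2*n-1))‖
          = |b n * ((2*n : ℕ):ℝ)| * |z ^ (2*n-1)| := by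
            rw [Real.norm_eq_abs, ← abs_mul]; ring_nf
        _ ≤ (2 * ((n:ℝ)^1 + 1)) * (r ^ n / r ^ 0) := by
            apply mul_le_mul hc (h1.trans h2) (abs_nonneg _) (by positivity)
        _ = 2 * (1/r^0) * (((n:ℝ)^1 + 1) * r^n) := by ring
  exact key u (mem_Ioo.mpr ⟨(abs_lt.mp hur).1, (abs_lt.mp hur).2⟩)

lemma hasDerivAt_D1 {u : ℝ} (h : |u| < 1) : HasDerivAt D1 (D2 u) u := by
  set r : ℝ := (|u|+1)/2 with hr
  have hr0 : 0 < r := by positivity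
  have hr1 : r < 1 := by rw [hr]; linarith
  have hur : |u| < r := by rw [hr]; linarith
  have key : ∀ y ∈ Ioo (-r) r,
      HasDerivAt (fun z => ∑' n : ℕ, b n * ((2*n : ℕ) * z ^ (2*n-1)))
      (∑' n : ℕ, b n * ((2*n : ℕ) * ((2*n-1 : ℕ) * y ^ (2*n-1-1)))) y := by
    intro y hy
    apply hasDerivAt_tsum_of_isPreconnected
      (u := fun n : ℕ => 4/r^2 * (((n:ℝ)^2 + 1) * r^n))
      ?_ isOpen_Ioo (convex_Ioo _ _).isPreconnected
      (fun n z _ => (((hasDerivAt_pow (2*n-1) z).const_mul ((2*n:ℕ):ℝ)).const_mul (b n)))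
      ?_ (mem_Ioo.mpr ⟨by linarith, hr0⟩ : (0:ℝ) ∈ Ioo (-r) r)
      (sum_D1 (by rw [abs_zero]; linarith : |(0:ℝ)| < 1)) (mem_Ioo.mpr ⟨hy.1, hy.2⟩)
    · have h1 := summable_pow_mul_geometric_of_norm_lt_one (R := ℝ) 2
        (r := r) (by rw [Real.norm_eq_abs, abs_of_pos hr0]; exact hr1)
      have h2 : Summable (fun n : ℕ => r ^ n) := summable_geometric_of_lt_one hr0.le hr1
      apply ((h1.add h2).mul_left (4/r^2)).congr
      intro n; ring
    · intro n z hz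
      have hzr : |z| ≤ r := (abs_lt.mpr ⟨hz.1, hz.2⟩).le
      have h1 : |z ^ (2*n-1-1)| ≤ r ^ (2*n-1-1) := by
        rw [abs_pow]; exact pow_le_pow_left₀ (abs_nonneg z) hzr _
      have h2 : r ^ (2*n-1-1) ≤ r ^ n / r ^ 2 := by
        rw [le_div_iff₀ (by positivity), ← pow_add]
        exact pow_le_pow_of_le_one hr0.le hr1.le (by omega)
      have hb1 := b_le_one n
      have hb0 := (b_pos n).le
      have d1 : ((2*n : ℕ) : ℝ) = 2 * n := by push_cast; ring
      have d2 : ((2*n-1 : ℕ) : ℝ) ≤ 2 * n := by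
        have : (2*n-1 : ℕ) ≤ 2*n := by omega
        calc ((2*n-1 : ℕ) : ℝ) ≤ ((2*n : ℕ) : ℝ) := by exact_mod_cast this
          _ = 2*n := d1
      have hc : |b n * (((2*n:ℕ):ℝ) * ((2*n-1:ℕ):ℝ))| ≤ 4 * ((n:ℝ)^2 + 1) := by
        rw [abs_mul, abs_of_nonneg hb0, abs_mul, abs_of_nonneg (Nat.cast_nonneg _),
          abs_of_nonneg (Nat.cast_nonneg _)]
        have e1 : ((2*n : ℕ) : ℝ) * ((2*n-1 : ℕ) : ℝ) ≤ (2*n)*(2*n) :=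
          mul_le_mul (le_of_eq d1) d2 (Nat.cast_nonneg _) (by positivity)
        nlinarith [Nat.cast_nonneg (α := ℝ) n,
          mul_nonneg (Nat.cast_nonneg (α := ℝ) (2*n : ℕ)) (Nat.cast_nonneg (α := ℝ) (2*n-1 : ℕ))]
      calc ‖b n * (((2*n:ℕ):ℝ) * (((2*n-1:ℕ):ℝ) * z ^ (2*n-1-1)))‖
          = |b n * (((2*n:ℕ):ℝ) * ((2*n-1:ℕ):ℝ))| * |z ^ (2*n-1-1)| := by
            rw [Real.norm_eq_abs, ← abs_mul]; ring_nf
        _ ≤ (4 * ((n:ℝ)^2 + 1)) * (r ^ n / r ^ 2) := by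
            apply mul_le_mul hc (h1.trans h2) (abs_nonneg _) (by positivity)
        _ = 4/r^2 * (((n:ℝ)^2 + 1) * r^n) := by ring
  exact key u (mem_Ioo.mpr ⟨(abs_lt.mp hur).1, (abs_lt.mp hur).2⟩)

lemma ode_identity {u : ℝ} (h : |u| < 1) :
    (1 - u^2) * D2 u = 3*u*D1 u + (5/9) * gg u := by
  have habs : |u| ≤ (|u|+1)/2 := by linarith [abs_nonneg u]
  have hr0 : (0:ℝ) < (|u|+1)/2 := by positivity
  have hr1 : (|u|+1)/2 < 1 := by linarith
  have hg := sum_g h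
  have hD1 := sum_D1 h
  have hD2 := sum_D2 h
  -- summabilities of the four u^{2n}-series
  have s1 : Summable (fun n : ℕ => ((36*(n:ℝ)^2+36*n+5)/9) * (b n * u^(2*n))) := by
    have := summable_master hr0 hr1 habs 2 0
      (fun n => ((36*(n:ℝ)^2+36*n+5)/9) * b n) (fun n => 2*n)
      (fun n => by
        have hb1 := b_le_one n
        have hb0 := (b_pos n).le
        rw [abs_mul, abs_of_nonneg hb0, abs_of_nonneg (by positivity)]
        have hn : (0:ℝ) ≤ (n:ℝ) := Nat.cast_nonneg n
        have hq : (0:ℝ) ≤ (36*(n:ℝ)^2+36*n+5)/9 := by positivity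
        calc (36*(n:ℝ)^2+36*n+5)/9 * b n ≤ (36*(n:ℝ)^2+36*n+5)/9 * 1 :=
              mul_le_mul_of_nonneg_left hb1 hq
          _ ≤ 36 * ((n:ℝ)^2 + 1) := by nlinarith)
      (fun n => by show n ≤ 2*n+0; omega)
    apply this.congr; intro n; ring
  have s2 : Summable (fun n : ℕ => (4*(n:ℝ)^2-2*n) * (b n * u^(2*n))) := by
    have := summable_master hr0 hr1 habs 2 0
      (fun n => (4*(n:ℝ)^2-2*n) * b n) (fun n => 2*n)
      (fun n => by
        have hb1 := b_le_one n
        have hb0 := (b_pos n).le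
        have hn : (0:ℝ) ≤ (n:ℝ) := Nat.cast_nonneg n
        have h48 : |(4*(n:ℝ)^2-2*n)| ≤ 4*(n:ℝ)^2+2*n := by
          rw [abs_le]; constructor <;> nlinarith
        rw [abs_mul, abs_of_nonneg hb0]
        calc |(4*(n:ℝ)^2-2*n)| * b n ≤ (4*(n:ℝ)^2+2*n) * 1 := by
              apply mul_le_mul h48 hb1 hb0 (by positivity)
          _ ≤ 6 * ((n:ℝ)^2 + 1) := by nlinarith
        )
      (fun n => by show n ≤ 2*n+0; omega)
    apply this.congr; intro n; ring
  have s3 : Summable (fun n : ℕ => (6*(n:ℝ)) * (b n * u^(2*n))) := by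
    have := summable_master hr0 hr1 habs 1 0
      (fun n => (6*(n:ℝ)) * b n) (fun n => 2*n)
      (fun n => by
        have hb1 := b_le_one n
        have hb0 := (b_pos n).le
        have hn : (0:ℝ) ≤ (n:ℝ) := Nat.cast_nonneg n
        rw [abs_mul, abs_of_nonneg hb0, abs_of_nonneg (by positivity)]
        nlinarith)
      (fun n => by show n ≤ 2*n+0; omega)
    apply this.congr; intro n; ring
  have s4 : Summable (fun n : ℕ => (5/9 : ℝ) * (b n * u^(2*n))) := hg.mul_left _
  -- identify D2 with reindexed series
  have e1 : D2 u = ∑' n : ℕ, ((36*(n:ℝ)^2+36*n+5)/9) * (b n * u^(2*n)) := by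
    rw [D2, Summable.tsum_eq_zero_add hD2]
    have h0 : b 0 * ((2*0 : ℕ) * ((2*0-1 : ℕ) * u ^ (2*0-1-1))) = 0 := by norm_num
    rw [h0, zero_add]
    apply tsum_congr
    intro n
    have q1 : 2*(n+1) = 2*n+2 := by omega
    have q2 : 2*(n+1)-1 = 2*n+1 := by omega
    have q3 : 2*(n+1)-1-1 = 2*n := by omega
    rw [q3, q2]
    have hb := b_rec n
    push_cast [q1]
    linear_combination (-(u^(2*n))/9) * hb
  have e2 : u^2 * D2 u = ∑' n : ℕ, (4*(n:ℝ)^2-2*n) * (b n * u^(2*n)) := by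
    rw [D2, ← tsum_mul_left]
    apply tsum_congr
    intro n
    rcases Nat.eq_zero_or_pos n with hn | hn
    · subst hn; norm_num
    · have q3 : 2*n-1-1+2 = 2*n := by omega
      have q4 : ((2*n-1 : ℕ) : ℝ) = 2*(n:ℝ)-1 := by
        have : (2*n-1 : ℕ) + 1 = 2*n := by omega
        have := congrArg (fun m : ℕ => (m:ℝ)) this
        push_cast at this
        linarith
      rw [show u ^ (2*n) = u ^ (2*n-1-1) * u^2 by rw [← pow_add, q3]]
      push_cast [q4]
      ring
  have e3 : 3*u*D1 u = ∑' n : ℕ, (6*(n:ℝ)) * (b n * u^(2*n)) := by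
    rw [D1, ← tsum_mul_left]
    apply tsum_congr
    intro n
    rcases Nat.eq_zero_or_pos n with hn | hn
    · subst hn; norm_num
    · have q3 : 2*n-1+1 = 2*n := by omega
      rw [show u ^ (2*n) = u ^ (2*n-1) * u by rw [← pow_succ, q3]]
      push_cast
      ring
  have e4 : (5/9 : ℝ)*gg u = ∑' n : ℕ, (5/9 : ℝ) * (b n * u^(2*n)) := by
    rw [gg, ← tsum_mul_left]
  calc (1 - u^2) * D2 u = D2 u - u^2 * D2 u := by ring
    _ = ∑' n : ℕ, (((36*(n:ℝ)^2+36*n+5)/9) * (b n * u^(2*n))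
          - (4*(n:ℝ)^2-2*n) * (b n * u^(2*n))) := by
        rw [e2, e1, Summable.tsum_sub s1 s2]
    _ = ∑' n : ℕ, ((6*(n:ℝ)) * (b n * u^(2*n)) + (5/9 : ℝ) * (b n * u^(2*n))) := by
        apply tsum_congr; intro n; ring
    _ = 3*u*D1 u + (5/9 : ℝ) * gg u := by rw [Summable.tsum_add s3 s4, e3, e4]

lemma closed_form {u : ℝ} (h0 : 0 ≤ u) (h1 : u < 1) :
    Real.sqrt (1 - u^2) * gg u = Real.cos (2/3 * Real.arcsin u) := by
  set r : ℝ := (u+1)/2 with hrdef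
  have hr0 : 0 < r := by positivity
  have hr1 : r < 1 := by rw [hrdef]; linarith
  have hur : u < r := by rw [hrdef]; linarith
  set θm : ℝ := Real.arcsin r with hθm
  have hθm0 : 0 < θm := Real.arcsin_pos.mpr hr0
  have hθmle : θm ≤ π/2 := Real.arcsin_le_pi_div_two r
  have hsin_mem : ∀ t ∈ Ioo (-θm) θm, |Real.sin t| < r := by
    intro t ht
    have ht1 : -(π/2) ≤ t := by linarith [ht.1]
    have ht2 : t ≤ π/2 := by linarith [ht.2]
    have hs1 : Real.sin t < r := by
      have := Real.strictMonoOn_sin (a := t) (b := θm)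
        ⟨ht1, ht2⟩ ⟨by linarith, hθmle⟩ ht.2
      rwa [hθm, Real.sin_arcsin (by linarith) hr1.le] at this
    have hs2 : -r < Real.sin t := by
      have := Real.strictMonoOn_sin (a := -θm) (b := t)
        ⟨by linarith, by linarith⟩ ⟨ht1, ht2⟩ ht.1
      rwa [Real.sin_neg, hθm, Real.sin_arcsin (by linarith) hr1.le] at this
    exact abs_lt.mpr ⟨hs2, hs1⟩
  -- the ODE vector field
  set v : ℝ → ℝ × ℝ → ℝ × ℝ := fun _ p => (p.2, -(4/9) * p.1) with hv
  have hlip : ∀ t, LipschitzOnWith 1 (v t) univ := by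
    intro t
    apply LipschitzOnWith.of_dist_le_mul
    intro p _ q _
    rw [hv]
    simp only [Prod.dist_eq, Real.dist_eq]
    rw [NNReal.coe_one, one_mul]
    apply max_le
    · exact le_max_right _ _
    · have : |(-(4/9) * p.1) - (-(4/9) * q.1)| = (4/9) * |p.1 - q.1| := by
        rw [show (-(4/9) * p.1) - (-(4/9) * q.1) = (-(4/9)) * (p.1 - q.1) by ring,
          abs_mul]
        norm_num
      rw [this]
      calc (4/9) * |p.1 - q.1| ≤ 1 * |p.1 - q.1| := by
            apply mul_le_mul_of_nonneg_right (by norm_num) (abs_nonneg _)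
        _ = |p.1 - q.1| := one_mul _
        _ ≤ max |p.1 - q.1| |p.2 - q.2| := le_max_left _ _
  set Y : ℝ → ℝ × ℝ := fun θ =>
    (Real.cos θ * gg (Real.sin θ),
      -Real.sin θ * gg (Real.sin θ) + Real.cos θ ^ 2 * D1 (Real.sin θ)) with hY
  set Z : ℝ → ℝ × ℝ := fun θ =>
    (Real.cos (2/3 * θ), -(2/3) * Real.sin (2/3 * θ)) with hZ
  have hYode : ∀ t ∈ Ioo (-θm) θm, HasDerivAt Y (v t (Y t)) t ∧ Y t ∈ univ := by
    intro t ht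
    refine ⟨?_, mem_univ _⟩
    have hst : |Real.sin t| < 1 := lt_of_lt_of_le (hsin_mem t ht) hr1.le
    have hgd : HasDerivAt (fun θ => gg (Real.sin θ)) (D1 (Real.sin t) * Real.cos t) t :=
      (hasDerivAt_gg hst).comp t (Real.hasDerivAt_sin t)
    have hD1d : HasDerivAt (fun θ => D1 (Real.sin θ)) (D2 (Real.sin t) * Real.cos t) t :=
      (hasDerivAt_D1 hst).comp t (Real.hasDerivAt_sin t)
    have h1 : HasDerivAt (fun θ => Real.cos θ * gg (Real.sin θ))
        (-Real.sin t * gg (Real.sin t) + Real.cos t ^ 2 * D1 (Real.sin t)) t := by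
      have := (Real.hasDerivAt_cos t).mul hgd
      refine this.congr_deriv ?_
      ring
    have h2 : HasDerivAt (fun θ =>
        -Real.sin θ * gg (Real.sin θ) + Real.cos θ ^ 2 * D1 (Real.sin θ))
        (-(4/9) * (Real.cos t * gg (Real.sin t))) t := by
      have ha : HasDerivAt (fun θ => -Real.sin θ * gg (Real.sin θ))
          (-Real.cos t * gg (Real.sin t) + (-Real.sin t) * (D1 (Real.sin t) * Real.cos t)) t := by
        have := ((Real.hasDerivAt_sin t).neg).mul hgd
        refine this.congr_deriv ?_
        rfl
      have hb : HasDerivAt (fun θ => Real.cos θ ^ 2 * D1 (Real.sin θ))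
          (2 * Real.cos t * (-Real.sin t) * D1 (Real.sin t)
            + Real.cos t ^ 2 * (D2 (Real.sin t) * Real.cos t)) t := by
        have hc2 : HasDerivAt (fun θ => Real.cos θ ^ 2)
            (2 * Real.cos t * (-Real.sin t)) t := by
          have := (Real.hasDerivAt_cos t).pow 2
          refine this.congr_deriv ?_
          ring
        have := hc2.mul hD1d
        refine this.congr_deriv ?_
        ring
      have hsum := ha.add hb
      refine hsum.congr_deriv ?_
      have hode := ode_identity hst
      have hcos2 : Real.cos t ^ 2 = 1 - Real.sin t ^ 2 := Real.cos_sq' t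
      have : Real.cos t ^ 3 * D2 (Real.sin t)
          = Real.cos t * (3 * Real.sin t * D1 (Real.sin t) + 5/9 * gg (Real.sin t)) := by
        rw [show Real.cos t ^ 3 = Real.cos t * Real.cos t ^ 2 by ring, hcos2, mul_assoc, hode]
      nlinarith [this]
    exact h1.prodMk (by convert h2 using 2)
  have hZode : ∀ t ∈ Ioo (-θm) θm, HasDerivAt Z (v t (Z t)) t ∧ Z t ∈ univ := by
    intro t ht
    refine ⟨?_, mem_univ _⟩
    have hid : HasDerivAt (fun θ : ℝ => 2/3 * θ) (2/3) t := by
      simpa using (hasDerivAt_id t).const_mul (2/3 : ℝ)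
    have h1 : HasDerivAt (fun θ => Real.cos (2/3 * θ)) (-(2/3) * Real.sin (2/3 * t)) t := by
      have := (Real.hasDerivAt_cos (2/3 * t)).comp t hid
      refine this.congr_deriv ?_
      ring
    have h2 : HasDerivAt (fun θ => -(2/3) * Real.sin (2/3 * θ))
        (-(4/9) * Real.cos (2/3 * t)) t := by
      have := ((Real.hasDerivAt_sin (2/3 * t)).comp t hid).const_mul (-(2/3) : ℝ)
      refine this.congr_deriv ?_
      ring
    exact h1.prodMk h2
  have hinit : Y 0 = Z 0 := by
    rw [hY, hZ]
    simp [Real.sin_zero, Real.cos_zero, gg_zero, D1_zero]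
  have heq := ODE_solution_unique_of_mem_Ioo (fun t _ => hlip t)
    (mem_Ioo.mpr ⟨by linarith, hθm0⟩) hYode hZode hinit
  have humem : Real.arcsin u ∈ Ioo (-θm) θm := by
    constructor
    · have := Real.arcsin_nonneg.mpr h0
      linarith
    · exact Real.strictMonoOn_arcsin ⟨by linarith, h1.le⟩ ⟨by linarith, hr1.le⟩ hur
  have := heq humem
  have hfst := congrArg Prod.fst this
  rw [hY, hZ] at hfst
  simp only at hfst
  rwa [Real.sin_arcsin (by linarith) h1.le, Real.cos_arcsin] at hfst


noncomputable def G (t : ℝ) : ℝ :=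
  Real.sqrt (1 - 108*t^2) * Real.cos (2/3 * Real.arcsin (6*Real.sqrt 3*t)) / 432

lemma G_cont : Continuous G := by
  unfold G
  exact ((Real.continuous_sqrt.comp (by fun_prop)).mul
    (Real.continuous_cos.comp ((continuous_const.mul
      (Real.continuous_arcsin.comp (by fun_prop))) : Continuous _))).div_const _

lemma trig_integral :
    ∫ θ in (0:ℝ)..(π/2), Real.cos θ ^ 2 * Real.cos (2/3*θ)
      = 27 * Real.sqrt 3 / 64 := by
  have key : ∀ θ ∈ uIcc (0:ℝ) (π/2), HasDerivAt
      (fun x => (3/4) * Real.sin (2/3*x) + (3/32) * Real.sin (8/3*x)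
        + (3/16) * Real.sin (4/3*x))
      (Real.cos θ ^ 2 * Real.cos (2/3*θ)) θ := by
    intro θ _
    have c1 : HasDerivAt (fun x : ℝ => 2/3*x) (2/3) θ := by
      simpa using (hasDerivAt_id θ).const_mul (2/3 : ℝ)
    have c2 : HasDerivAt (fun x : ℝ => 8/3*x) (8/3) θ := by
      simpa using (hasDerivAt_id θ).const_mul (8/3 : ℝ)
    have c3 : HasDerivAt (fun x : ℝ => 4/3*x) (4/3) θ := by
      simpa using (hasDerivAt_id θ).const_mul (4/3 : ℝ)
    have h1 := ((Real.hasDerivAt_sin (2/3*θ)).comp θ c1).const_mul (3/4 : ℝ)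
    have h2 := ((Real.hasDerivAt_sin (8/3*θ)).comp θ c2).const_mul (3/32 : ℝ)
    have h3 := ((Real.hasDerivAt_sin (4/3*θ)).comp θ c3).const_mul (3/16 : ℝ)
    have := (h1.add h2).add h3
    refine this.congr_deriv ?_
    have e8 : (8:ℝ)/3*θ = 2*θ + 2/3*θ := by ring
    have e4 : (4:ℝ)/3*θ = 2*θ - 2/3*θ := by ring
    rw [e8, e4, Real.cos_add, Real.cos_sub, Real.cos_two_mul]
    ring
  rw [integral_eq_sub_of_hasDerivAt key (Continuous.intervalIntegrable (by fun_prop) _ _)]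
  have v1 : (2:ℝ)/3*(π/2) = π/3 := by ring
  have v2 : (8:ℝ)/3*(π/2) = π + π/3 := by ring
  have v3 : (4:ℝ)/3*(π/2) = π - π/3 := by ring
  rw [v1, v2, v3, Real.sin_add, Real.sin_pi, Real.cos_pi, Real.sin_pi_sub,
    Real.sin_pi_div_three]
  norm_num
  ring

lemma G_integral : ∫ t in (0:ℝ)..(1/(6*Real.sqrt 3)), G t = 1/6144 := by
  have hs3 : (0:ℝ) < Real.sqrt 3 := Real.sqrt_pos.mpr (by norm_num)
  have hs3sq : Real.sqrt 3 * Real.sqrt 3 = 3 := Real.mul_self_sqrt (by norm_num)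
  have hsub : ∫ θ in (0:ℝ)..(π/2), (Real.cos θ / (6*Real.sqrt 3)) • G (Real.sin θ / (6*Real.sqrt 3))
      = ∫ t in (0:ℝ)..(1/(6*Real.sqrt 3)), G t := by
    have hφ : ∀ θ ∈ uIcc (0:ℝ) (π/2),
        HasDerivAt (fun x => Real.sin x / (6*Real.sqrt 3)) (Real.cos θ / (6*Real.sqrt 3)) θ := by
      intro θ _
      simpa [div_eq_mul_inv] using (Real.hasDerivAt_sin θ).mul_const ((6*Real.sqrt 3)⁻¹)
    have := integral_comp_smul_deriv hφ (by fun_prop) G_cont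
    simpa [Real.sin_pi_div_two, Real.sin_zero] using this
  rw [← hsub]
  have hcongr : ∫ θ in (0:ℝ)..(π/2), (Real.cos θ / (6*Real.sqrt 3)) • G (Real.sin θ / (6*Real.sqrt 3))
      = ∫ θ in (0:ℝ)..(π/2), (1/(2592*Real.sqrt 3)) * (Real.cos θ ^ 2 * Real.cos (2/3*θ)) := by
    apply integral_congr
    intro θ hθ
    rw [uIcc_of_le (by positivity : (0:ℝ) ≤ π/2)] at hθ
    have hθ0 := hθ.1
    have hθ2 := hθ.2
    have hcosnn : 0 ≤ Real.cos θ := Real.cos_nonneg_of_mem_Icc ⟨by linarith [Real.pi_pos], hθ2⟩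
    have harg : 6*Real.sqrt 3 * (Real.sin θ / (6*Real.sqrt 3)) = Real.sin θ := by
      field_simp
    have h108 : 1 - 108 * (Real.sin θ / (6*Real.sqrt 3))^2 = Real.cos θ ^ 2 := by
      have : (6*Real.sqrt 3)^2 = 108 := by nlinarith
      field_simp [this]
      nlinarith [Real.sin_sq_add_cos_sq θ]
    have hsq : Real.sqrt (Real.cos θ ^ 2) = Real.cos θ := by
      rw [Real.sqrt_sq hcosnn]
    have harcsin : Real.arcsin (Real.sin θ) = θ :=
      Real.arcsin_sin (by linarith [Real.pi_pos]) hθ2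
    simp only [G, h108, hsq, harg, harcsin, smul_eq_mul]
    ring
  rw [hcongr, intervalIntegral.integral_const_mul, trig_integral]
  have h6144 : (2592:ℝ) * Real.sqrt 3 ≠ 0 := by positivity
  field_simp
  nlinarith [hs3sq, hs3]

lemma gg_def (u : ℝ) : gg u = ∑' n, b n * u ^ (2*n) := rfl


theorem f_value_at_endpoint :
    HasSum (fun n : ℕ => S n * (1 / (6 * Real.sqrt 3)) ^ (2 * n + 3) / (2 * n + 3))
      (1 / 6144) := by
  have hs3 : (0:ℝ) < Real.sqrt 3 := Real.sqrt_pos.mpr (by norm_num)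
  have hs3sq : Real.sqrt 3 * Real.sqrt 3 = 3 := Real.mul_self_sqrt (by norm_num)
  set x₀ : ℝ := 1 / (6 * Real.sqrt 3) with hx₀def
  have hx₀ : 0 < x₀ := by positivity
  have h63 : 6 * Real.sqrt 3 * x₀ = 1 := by
    rw [hx₀def]; field_simp
  have hx₀sq : 108 * x₀^2 = 1 := by
    have : (6 * Real.sqrt 3)^2 = 108 := by nlinarith
    nlinarith [h63]
  set term : ℕ → ℝ := fun n => S n * x₀ ^ (2 * n + 3) / (2 * n + 3) with hterm
  have hSnn : ∀ n, 0 ≤ S n := by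
    intro n
    rw [S_eq]
    have := b_pos n
    positivity
  have htermnn : ∀ n, 0 ≤ term n := by
    intro n
    rw [hterm]
    have := hSnn n
    have h3 : (0:ℝ) < 2 * n + 3 := by positivity
    positivity
  -- step A : term as an integral
  have hIpow : ∀ m : ℕ, ∫ t in (0:ℝ)..x₀, t^m = x₀^(m+1)/(m+1) := by
    intro m
    rw [integral_pow]
    rw [zero_pow (by omega : m + 1 ≠ 0)]
    ring
  have htermI : ∀ n : ℕ, term n
      = ∫ t in (0:ℝ)..x₀, (x₀^2 - t^2) * (b n * 108^n * t^(2*n)) / 4 := by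
    intro n
    have e : ∀ t : ℝ, (x₀^2 - t^2) * (b n * 108^n * t^(2*n)) / 4
        = (b n * 108^n * x₀^2/4) * t^(2*n) - (b n * 108^n/4) * t^(2*n+2) := by
      intro t; ring
    rw [integral_congr (g := fun t => (b n * 108^n * x₀^2/4) * t^(2*n)
        - (b n * 108^n/4) * t^(2*n+2)) (fun t _ => e t)]
    rw [integral_sub (f := fun t => (b n * 108^n * x₀^2/4) * t^(2*n))
        (g := fun t => (b n * 108^n/4) * t^(2*n+2)) ((continuous_const.mul (continuous_pow _)).intervalIntegrable _ _)
        ((continuous_const.mul (continuous_pow _)).intervalIntegrable _ _),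
      intervalIntegral.integral_const_mul, intervalIntegral.integral_const_mul, hIpow, hIpow]
    rw [hterm]
    simp only []
    rw [S_eq]
    have hb := b_pos n
    have h1 : (2*(n:ℝ)+1) ≠ 0 := by positivity
    have h3 : (2*(n:ℝ)+3) ≠ 0 := by positivity
    push_cast
    have hxp1 : x₀^(2*n+3) = x₀^2 * x₀^(2*n+1) := by ring
    have hxp2 : x₀^(2*n+2+1) = x₀^(2*n+3) := by ring
    rw [hxp2, hxp1]
    field_simp
    ring
  -- measure-theoretic interchange
  set μ : Measure ℝ := volume.restrict (Ioo (0:ℝ) x₀) with hμ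
  set fR : ℕ → ℝ → ℝ := fun n t => (x₀^2 - t^2) * (b n * 108^n * t^(2*n)) / 4 with hfR
  have hfRcont : ∀ n, Continuous (fR n) := by
    intro n
    rw [hfR]
    fun_prop
  have hfRnn : ∀ n, ∀ t ∈ Ioo (0:ℝ) x₀, 0 ≤ fR n t := by
    intro n t ht
    have h1 : 0 ≤ x₀^2 - t^2 := by nlinarith [ht.1, ht.2]
    have h2 := (b_pos n).le
    have h3 : (0:ℝ) ≤ t := ht.1.le
    rw [hfR]
    positivity
  have hInt : ∀ n, IntegrableOn (fR n) (Ioo (0:ℝ) x₀) volume := by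
    intro n
    exact ((hfRcont n).integrableOn_Icc).mono_set Ioo_subset_Icc_self
  have hae : ∀ h : ℝ → ℝ, (∀ t ∈ Ioo (0:ℝ) x₀, 0 ≤ h t) → 0 ≤ᵐ[μ] h := by
    intro h hh
    rw [hμ]
    exact (ae_restrict_iff' measurableSet_Ioo).mpr (Filter.Eventually.of_forall hh)
  have hioc : ∀ h : ℝ → ℝ, ∫ t, h t ∂μ = ∫ t in (0:ℝ)..x₀, h t := by
    intro h
    rw [hμ, MeasureTheory.restrict_Ioo_eq_restrict_Ioc, ← intervalIntegral.integral_of_le hx₀.le]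
  have hA : ∀ n, ∫⁻ t, ENNReal.ofReal (fR n t) ∂μ = ENNReal.ofReal (term n) := by
    intro n
    rw [← ofReal_integral_eq_lintegral_ofReal (hInt n) (hae (fR n) (hfRnn n))]
    congr 1
    rw [hioc, ← htermI n]
  have hmeas : ∀ n, AEMeasurable (fun t => ENNReal.ofReal (fR n t)) μ :=
    fun n => ((hfRcont n).measurable.ennreal_ofReal).aemeasurable
  have hGnn : ∀ t : ℝ, 0 ≤ G t := by
    intro t
    have harc : Real.arcsin (6*Real.sqrt 3*t) ∈ Icc (-(π/2)) (π/2) := Real.arcsin_mem_Icc _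
    have hcos : 0 ≤ Real.cos (2/3 * Real.arcsin (6*Real.sqrt 3*t)) := by
      apply Real.cos_nonneg_of_mem_Icc
      constructor
      · nlinarith [harc.1, harc.2, Real.pi_pos]
      · nlinarith [harc.1, harc.2, Real.pi_pos]
    have := Real.sqrt_nonneg (1 - 108*t^2)
    rw [G]
    positivity
  have hC : ∀ t ∈ Ioo (0:ℝ) x₀, (∑' n, ENNReal.ofReal (fR n t)) = ENNReal.ofReal (G t) := by
    intro t ht
    have ht0 : 0 < t := ht.1
    have hu0 : 0 ≤ 6*Real.sqrt 3*t := by positivity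
    have hu1 : 6*Real.sqrt 3*t < 1 := by
      rw [← h63]
      have : (0:ℝ) < 6*Real.sqrt 3 := by positivity
      exact mul_lt_mul_of_pos_left ht.2 this
    have habs : |6*Real.sqrt 3*t| < 1 := by rwa [abs_of_nonneg hu0]
    have hun : ∀ n : ℕ, (6*Real.sqrt 3*t)^(2*n) = 108^n * t^(2*n) := by
      intro n
      rw [pow_mul, pow_mul, show (6*Real.sqrt 3*t)^2 = 108*t^2 by nlinarith, mul_pow]
    have hfr_eq : ∀ n : ℕ, fR n t = ((x₀^2 - t^2)/4) * (b n * (6*Real.sqrt 3*t)^(2*n)) := by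
      intro n
      rw [hfR, hun n]
      ring
    have hsummable : Summable (fun n => fR n t) := by
      apply Summable.congr (((sum_g habs).mul_left ((x₀^2 - t^2)/4)))
      intro n
      rw [hfr_eq n]
    rw [← ENNReal.ofReal_tsum_of_nonneg (hfRnn · t ht) hsummable]
    congr 1
    have htsum : (∑' n, fR n t) = ((x₀^2 - t^2)/4) * gg (6*Real.sqrt 3*t) := by
      rw [gg_def, ← tsum_mul_left]
      exact tsum_congr (fun n => hfr_eq n)
    rw [htsum, G]
    have h1u : 1 - (6*Real.sqrt 3*t)^2 = 1 - 108*t^2 := by nlinarith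
    have hcf := closed_form hu0 hu1
    rw [h1u] at hcf
    have hfac : x₀^2 - t^2 = (1 - 108*t^2)/108 := by nlinarith
    have hnn : 0 ≤ 1 - 108*t^2 := by nlinarith [ht.2, ht.1]
    have hsq : Real.sqrt (1-108*t^2) * Real.sqrt (1-108*t^2) = 1 - 108*t^2 :=
      Real.mul_self_sqrt hnn
    rw [hfac]
    rw [← hcf]
    linear_combination (-(gg (6*Real.sqrt 3*t))/432) * hsq
  have hchain : (∑' n, ENNReal.ofReal (term n)) = ENNReal.ofReal (1/6144) := by
    have h1 : (∑' n, ENNReal.ofReal (term n)) = ∑' n, ∫⁻ t, ENNReal.ofReal (fR n t) ∂μ :=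
      tsum_congr (fun n => (hA n).symm)
    rw [h1, ← lintegral_tsum hmeas]
    have h2 : ∫⁻ t, (∑' n, ENNReal.ofReal (fR n t)) ∂μ = ∫⁻ t, ENNReal.ofReal (G t) ∂μ := by
      apply lintegral_congr_ae
      rw [hμ]
      exact (ae_restrict_iff' measurableSet_Ioo).mpr (Filter.Eventually.of_forall hC)
    rw [h2, ← ofReal_integral_eq_lintegral_ofReal
      (G_cont.integrableOn_Icc.mono_set Ioo_subset_Icc_self)
      (hae G (fun t _ => hGnn t))]
    rw [hioc, G_integral]
  have hne : (∑' n, ENNReal.ofReal (term n)) ≠ ⊤ := by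
    rw [hchain]; exact ENNReal.ofReal_ne_top
  have hsummable : Summable term := by
    have := ENNReal.summable_toReal hne
    apply this.congr
    intro n
    rw [ENNReal.toReal_ofReal (htermnn n)]
  have htsum : (∑' n, term n) = 1/6144 := by
    have := ENNReal.ofReal_tsum_of_nonneg htermnn hsummable
    rw [hchain] at this
    exact (ENNReal.ofReal_eq_ofReal_iff (tsum_nonneg htermnn) (by norm_num)).mp this
  exact htsum ▸ hsummable.hasSum
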